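/- If x ⊥_B y for nonzero x, y in a real normed space and ‖x‖ ≤ ‖y‖, then for α, β > 0, (α‖x‖+β‖y‖)/‖x−y‖ · ‖x/‖x‖ − y/‖y‖‖ ≤ α + 2β. -/
import Mathlib


def BirkhoffOrth {X : Type*} [NormedAddCommGroup X] [NormedSpace ℝ X] (x y : X) : Prop :=
  ∀ t : ℝ, ‖x‖ ≤ ‖x + t • y‖

theorem birkhoff_bound {X : Type*} [NormedAddCommGroup X] [NormedSpace ℝ X]
    (x y : X) (hx : x ≠ 0) (hy : y ≠ 0) (hB : BirkhoffOrth x y) (hle : ‖x‖ ≤ ‖y‖)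
    (α β : ℝ) (hα : 0 < α) (hβ : 0 < β) :
    (α * ‖x‖ + β * ‖y‖) / ‖x - y‖ * ‖‖x‖⁻¹ • x - ‖y‖⁻¹ • y‖ ≤ α + 2 * β := by
  set u : X := ‖x‖⁻¹ • x - ‖y‖⁻¹ • y with hu
  have hnx : (0:ℝ) < ‖x‖ := norm_pos_iff.mpr hx
  have hny : (0:ℝ) < ‖y‖ := norm_pos_iff.mpr hy
  -- Birkhoff with t = -1 gives ‖x‖ ≤ ‖x - y‖
  have hxy : ‖x‖ ≤ ‖x - y‖ := by
    have := hB (-1)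
    simpa [neg_smul, sub_eq_add_neg] using this
  have hxy0 : (0:ℝ) < ‖x - y‖ := lt_of_lt_of_le hnx hxy
  set c : ℝ := ‖x‖ / ‖y‖ with hc
  have hc0 : 0 < c := div_pos hnx hny
  have hc1 : c ≤ 1 := (div_le_one hny).mpr hle
  -- ‖x‖ • u = (1-c) • x + c • (x - y)
  have hkey : (‖x‖ : ℝ) • u = (1 - c) • x + c • (x - y) := by
    rw [hu, hc, div_eq_mul_inv, smul_sub, smul_smul, mul_inv_cancel₀ hnx.ne', one_smul]
    module
  have hA : ‖x‖ * ‖u‖ ≤ ‖x - y‖ := by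
    have h1 : ‖(‖x‖ : ℝ) • u‖ ≤ (1 - c) * ‖x‖ + c * ‖x - y‖ := by
      rw [hkey]
      calc ‖(1 - c) • x + c • (x - y)‖ ≤ ‖(1 - c) • x‖ + ‖c • (x - y)‖ := norm_add_le _ _
        _ = (1 - c) * ‖x‖ + c * ‖x - y‖ := by
            rw [norm_smul, norm_smul, Real.norm_eq_abs, Real.norm_eq_abs,
              abs_of_nonneg (by linarith), abs_of_nonneg hc0.le]
    have h2 : ‖(‖x‖ : ℝ) • u‖ = ‖x‖ * ‖u‖ := by
      rw [norm_smul, Real.norm_eq_abs, abs_of_pos hnx]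
    nlinarith [h1, h2]
  -- ‖y‖ • u = (x - y) + (‖y‖/‖x‖ - 1) • x
  have hkey2 : (‖y‖ : ℝ) • u = (x - y) + (‖y‖ / ‖x‖ - 1) • x := by
    rw [hu, div_eq_mul_inv, smul_sub, smul_smul, smul_smul, mul_inv_cancel₀ hny.ne', one_smul]
    module
  have hnn : ‖y‖ - ‖x‖ ≤ ‖x - y‖ := by
    have := norm_sub_norm_le y x
    rwa [norm_sub_rev] at this
  have hB2 : ‖y‖ * ‖u‖ ≤ 2 * ‖x - y‖ := by
    have h1 : ‖(‖y‖ : ℝ) • u‖ ≤ ‖x - y‖ + (‖y‖ / ‖x‖ - 1) * ‖x‖ := by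
      rw [hkey2]
      calc ‖(x - y) + (‖y‖ / ‖x‖ - 1) • x‖ ≤ ‖x - y‖ + ‖(‖y‖ / ‖x‖ - 1) • x‖ :=
            norm_add_le _ _
        _ = ‖x - y‖ + (‖y‖ / ‖x‖ - 1) * ‖x‖ := by
            rw [norm_smul, Real.norm_eq_abs, abs_of_nonneg]
            have : (1:ℝ) ≤ ‖y‖ / ‖x‖ := (one_le_div hnx).mpr hle
            linarith
    have h2 : ‖(‖y‖ : ℝ) • u‖ = ‖y‖ * ‖u‖ := by
      rw [norm_smul, Real.norm_eq_abs, abs_of_pos hny]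
    have h3 : (‖y‖ / ‖x‖ - 1) * ‖x‖ = ‖y‖ - ‖x‖ := by
      field_simp
    nlinarith [h1, h2]
  rw [div_mul_eq_mul_div, div_le_iff₀ hxy0]
  nlinarith [hA, hB2, mul_le_mul_of_nonneg_left hA hα.le,
    mul_le_mul_of_nonneg_left hB2 hβ.le]
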